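/- Assume in addition that for every τ ∈ ℝ the map y ↦ V(τ, y) is Fréchet differentiable and that the map (τ, y) ↦ D_yV(τ, y) is continuous on ℝ × ℝⁿ. Let θ be a local flow map for V on I₀. Then for every (τ, τ₀, x) ∈ I₀ × I₀ × ℝⁿ the partial derivative of θ with respect to its second argument exists and is given by ∂θ/∂τ₀(τ, τ₀, x) = −(D_x θ(τ, τ₀, x))(V(τ₀, x)), where D_x θ(τ, τ₀, x) is the Fréchet derivative of θ with respect to its third argument. -/

import Mathlib

set_option maxHeartbeats 1000000

open Set

section Aux

variable {E : Type*} [NormedAddCommGroup E] [NormedSpace ℝ E]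

lemma my_exp_sub_one_le {t : ℝ} (ht : 0 ≤ t) : Real.exp t - 1 ≤ t * Real.exp t := by
  have h1 : 1 - t ≤ Real.exp (-t) := by
    have := Real.add_one_le_exp (-t); linarith
  have h2 : Real.exp (-t) * Real.exp t = 1 := by
    rw [← Real.exp_add]; simp
  nlinarith [Real.exp_pos t, mul_le_mul_of_nonneg_right h1 (Real.exp_pos t).le]

lemma my_gronwallBound_le {δ K ε x : ℝ} (hK : 0 ≤ K) (hε : 0 ≤ ε) (hx : 0 ≤ x) :
    gronwallBound δ K ε x ≤ (δ + ε * x) * Real.exp (K * x) := by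
  rcases hK.eq_or_lt with hK0 | hK0
  · rw [← hK0]
    simp only [gronwallBound_K0, zero_mul, Real.exp_zero, mul_one, le_refl]
  · rw [gronwallBound_of_K_ne_0 hK0.ne']
    have h1 : Real.exp (K * x) - 1 ≤ K * x * Real.exp (K * x) :=
      my_exp_sub_one_le (by positivity)
    have h2 : ε / K * (Real.exp (K * x) - 1) ≤ ε / K * (K * x * Real.exp (K * x)) :=
      mul_le_mul_of_nonneg_left h1 (by positivity)
    have h3 : ε / K * (K * x * Real.exp (K * x)) = ε * (x * Real.exp (K * x)) := by
      field_simp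
    have h4 : (δ + ε * x) * Real.exp (K * x)
        = δ * Real.exp (K * x) + ε * (x * Real.exp (K * x)) := by ring
    linarith

/-- One-sided Grönwall estimate. -/
lemma my_gron_right {f f' : ℝ → E} {K ε δ a b : ℝ} (hK : 0 ≤ K) (hε : 0 ≤ ε) (hab : a ≤ b)
    (hd : ∀ u ∈ Set.Icc a b, HasDerivAt f (f' u) u)
    (hb : ∀ u ∈ Set.Icc a b, ‖f' u‖ ≤ K * ‖f u‖ + ε)
    (h0 : ‖f a‖ ≤ δ) :
    ‖f b‖ ≤ (δ + ε * (b - a)) * Real.exp (K * (b - a)) := by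
  have h := norm_le_gronwallBound_of_norm_deriv_right_le
    (fun u hu => (hd u hu).continuousAt.continuousWithinAt)
    (fun u hu => ((hd u (Set.Ico_subset_Icc_self hu)).hasDerivWithinAt))
    h0 (fun u hu => hb u (Set.Ico_subset_Icc_self hu)) b ⟨hab, le_rfl⟩
  exact h.trans (my_gronwallBound_le hK hε (by linarith))

/-- Two-sided Grönwall estimate. -/
lemma my_gron {f f' : ℝ → E} {K ε δ t₀ t : ℝ} (hK : 0 ≤ K) (hε : 0 ≤ ε)
    (hd : ∀ u ∈ Set.uIcc t₀ t, HasDerivAt f (f' u) u)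
    (hb : ∀ u ∈ Set.uIcc t₀ t, ‖f' u‖ ≤ K * ‖f u‖ + ε)
    (h0 : ‖f t₀‖ ≤ δ) :
    ‖f t‖ ≤ (δ + ε * |t - t₀|) * Real.exp (K * |t - t₀|) := by
  rcases le_total t₀ t with hle | hle
  · rw [Set.uIcc_of_le hle] at hd hb
    rw [abs_of_nonneg (by linarith)]
    exact my_gron_right hK hε hle hd hb h0
  · rw [Set.uIcc_of_ge hle] at hd hb
    rw [abs_of_nonpos (by linarith), neg_sub]
    set g : ℝ → E := fun u => f (t₀ + t - u) with hg
    have hrefl : ∀ u ∈ Set.Icc t t₀, t₀ + t - u ∈ Set.Icc t t₀ := by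
      intro u hu; exact ⟨by linarith [hu.2], by linarith [hu.1]⟩
    have hgd : ∀ u ∈ Set.Icc t t₀, HasDerivAt g (-(f' (t₀ + t - u))) u := by
      intro u hu
      have hh : HasDerivAt (fun u : ℝ => t₀ + t - u) (-1) u := by
        simpa using (hasDerivAt_id u).const_sub (t₀ + t)
      have := HasDerivAt.scomp (𝕜 := ℝ) u (hd _ (hrefl u hu)) hh
      simpa [hg, Function.comp_def] using this
    have hgb : ∀ u ∈ Set.Icc t t₀, ‖-(f' (t₀ + t - u))‖ ≤ K * ‖g u‖ + ε := by
      intro u hu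
      rw [norm_neg]
      exact hb _ (hrefl u hu)
    have h0' : ‖g t‖ ≤ δ := by
      have : t₀ + t - t = t₀ := by ring
      simpa [hg, this] using h0
    have := my_gron_right hK hε hle hgd hgb h0'
    have hgt : g t₀ = f t := by simp [hg, show t₀ + t - t₀ = t by ring]
    rwa [hgt] at this

lemma my_abs_uIcc {u s t : ℝ} (h : u ∈ Set.uIcc s t) : |u - s| ≤ |t - s| := by
  rw [Set.mem_uIcc] at h
  rcases h with ⟨h1, h2⟩ | ⟨h1, h2⟩ <;> rcases abs_cases (t - s) with ⟨he, hn⟩ | ⟨he, hn⟩ <;>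
    rw [abs_le] <;> constructor <;> linarith

lemma my_seg_norm {p q w : E} (hw : w ∈ segment ℝ p q) : ‖w - p‖ ≤ ‖q - p‖ := by
  obtain ⟨u, v, hu, hv, huv, rfl⟩ := hw
  have hu1 : u = 1 - v := by linarith
  have h : u • p + v • q - p = v • (q - p) := by
    rw [hu1, sub_smul, one_smul, smul_sub]; abel
  rw [h, norm_smul, Real.norm_eq_abs, abs_of_nonneg hv]
  calc v * ‖q - p‖ ≤ 1 * ‖q - p‖ :=
        mul_le_mul_of_nonneg_right (by linarith) (norm_nonneg _)
    _ = ‖q - p‖ := one_mul _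

end Aux

/-- A *local flow map* for `V` on `I₀`: for every `(τ₀, x) ∈ I₀ × ℝⁿ`, the curve
`τ ↦ θ τ τ₀ x` is differentiable on `I₀`, satisfies `θ τ₀ τ₀ x = x`, and
`∂θ/∂τ (τ, τ₀, x) = V (τ, θ τ τ₀ x)` for all `τ ∈ I₀`. -/
def IsLocalFlowMap {n : ℕ}
    (V : ℝ × EuclideanSpace ℝ (Fin n) → EuclideanSpace ℝ (Fin n))
    (I₀ : Set ℝ)
    (θ : ℝ → ℝ → EuclideanSpace ℝ (Fin n) → EuclideanSpace ℝ (Fin n)) : Prop :=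
  ∀ τ₀ ∈ I₀, ∀ x : EuclideanSpace ℝ (Fin n),
    θ τ₀ τ₀ x = x ∧
    ∀ τ ∈ I₀, HasDerivAt (fun s => θ s τ₀ x) (V (τ, θ τ τ₀ x)) τ

/-- **Derivative of the flow with respect to the initial time.**
Let `V : ℝ × ℝⁿ → ℝⁿ` be continuous and bounded, uniformly Lipschitz in the second variable
with constant `C > 0`, such that `y ↦ V (τ, y)` is Fréchet differentiable for each `τ` and
`(τ, y) ↦ D_y V (τ, y)` is continuous. Let `I₀ = Ioo a b` be an open interval of length less
than `1/C` and let `θ` be a local flow map for `V` on `I₀`. Then for every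
`(τ, τ₀, x) ∈ I₀ × I₀ × ℝⁿ` the derivative of `θ` with respect to its second argument
exists and equals `- (D_x θ (τ, τ₀, x)) (V (τ₀, x))`, where `D_x θ (τ, τ₀, x)` is the
Fréchet derivative of `θ` with respect to its third argument (which exists). -/
theorem stmt_8 {n : ℕ} (hn : 1 ≤ n)
    (V : ℝ × EuclideanSpace ℝ (Fin n) → EuclideanSpace ℝ (Fin n))
    (C : ℝ) (hC : 0 < C)
    (hVcont : Continuous V)
    (hVbdd : ∃ M : ℝ, ∀ p, ‖V p‖ ≤ M)
    (hVlip : ∀ (τ : ℝ) (y₁ y₂ : EuclideanSpace ℝ (Fin n)),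
      ‖V (τ, y₁) - V (τ, y₂)‖ ≤ C * ‖y₁ - y₂‖)
    (hVdiff : ∀ τ : ℝ, Differentiable ℝ (fun y => V (τ, y)))
    (hDVcont : Continuous (fun p : ℝ × EuclideanSpace ℝ (Fin n) =>
      fderiv ℝ (fun y => V (p.1, y)) p.2))
    (a b : ℝ) (hab : a < b) (hlen : b - a < 1 / C)
    (θ : ℝ → ℝ → EuclideanSpace ℝ (Fin n) → EuclideanSpace ℝ (Fin n))
    (hθ : IsLocalFlowMap V (Set.Ioo a b) θ) :
    ∀ τ ∈ Set.Ioo a b, ∀ τ₀ ∈ Set.Ioo a b, ∀ x : EuclideanSpace ℝ (Fin n),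
      DifferentiableAt ℝ (fun z => θ τ τ₀ z) x ∧
      HasDerivAt (fun s => θ τ s x)
        (-(fderiv ℝ (fun z => θ τ τ₀ z) x (V (τ₀, x)))) τ₀ := by
  classical
  obtain ⟨M, hM⟩ := hVbdd
  have hM0 : 0 ≤ M := le_trans (norm_nonneg _) (hM (0, 0))
  set I : Set ℝ := Set.Ioo a b with hIdef
  have hinit : ∀ s ∈ I, ∀ y : (EuclideanSpace ℝ (Fin n)), θ s s y = y := fun s hs y => (hθ s hs y).1
  have hode : ∀ s ∈ I, ∀ y : (EuclideanSpace ℝ (Fin n)), ∀ t ∈ I,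
      HasDerivAt (fun u => θ u s y) (V (t, θ t s y)) t := fun s hs y => (hθ s hs y).2
  have hsubI : ∀ {s t : ℝ}, s ∈ I → t ∈ I → Set.uIcc s t ⊆ I :=
    fun hs ht => Set.ordConnected_Ioo.uIcc_subset hs ht
  have hCab : C * (b - a) < 1 := by
    have h := mul_lt_mul_of_pos_left hlen hC
    rwa [mul_one_div, div_self hC.ne'] at h
  -- uniform Lipschitz of V in y, as `LipschitzWith`
  have hVlipW : ∀ t : ℝ, LipschitzWith C.toNNReal (fun y : (EuclideanSpace ℝ (Fin n)) => V (t, y)) := by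
    intro t
    apply LipschitzWith.of_dist_le_mul
    intro y₁ y₂
    rw [dist_eq_norm, dist_eq_norm, Real.coe_toNNReal _ hC.le]
    exact hVlip t y₁ y₂
  have hA_norm : ∀ (t : ℝ) (w : (EuclideanSpace ℝ (Fin n))), ‖fderiv ℝ (fun y => V (t, y)) w‖ ≤ C := by
    intro t w
    have := norm_fderiv_le_of_lipschitz (𝕜 := ℝ) (x₀ := w) (hVlipW t)
    rwa [Real.coe_toNNReal _ hC.le] at this
  set K₁ : ℝ := Real.exp (C * (b - a)) with hK₁def
  have hK₁pos : 0 < K₁ := Real.exp_pos _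
  have habs_ab : ∀ {s t : ℝ}, s ∈ I → t ∈ I → |s - t| ≤ b - a := by
    intro s t hs ht
    rw [abs_le]
    constructor <;> [linarith [hs.1, ht.2]; linarith [hs.2, ht.1]]
  intro τ hτ τ₀ hτ₀ x
  -- Lipschitz dependence of the flow on the initial value
  have hlip' : ∀ t ∈ I, ∀ y₁ y₂ : (EuclideanSpace ℝ (Fin n)), ‖θ t τ₀ y₁ - θ t τ₀ y₂‖ ≤ K₁ * ‖y₁ - y₂‖ := by
    intro t ht y₁ y₂
    have h := my_gron (f := fun u => θ u τ₀ y₁ - θ u τ₀ y₂)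
      (f' := fun u => V (u, θ u τ₀ y₁) - V (u, θ u τ₀ y₂))
      (K := C) (ε := 0) (δ := ‖y₁ - y₂‖) (t₀ := τ₀) (t := t) hC.le le_rfl
      (fun u hu => (hode τ₀ hτ₀ y₁ u (hsubI hτ₀ ht hu)).sub
        (hode τ₀ hτ₀ y₂ u (hsubI hτ₀ ht hu)))
      (fun u hu => by simpa using hVlip u (θ u τ₀ y₁) (θ u τ₀ y₂))
      (by simp [hinit τ₀ hτ₀ y₁, hinit τ₀ hτ₀ y₂])
    have h2 : Real.exp (C * |t - τ₀|) ≤ K₁ :=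
      Real.exp_le_exp.mpr (mul_le_mul_of_nonneg_left (habs_ab ht hτ₀) hC.le)
    calc ‖θ t τ₀ y₁ - θ t τ₀ y₂‖
        ≤ (‖y₁ - y₂‖ + 0 * |t - τ₀|) * Real.exp (C * |t - τ₀|) := h
      _ = Real.exp (C * |t - τ₀|) * ‖y₁ - y₂‖ := by ring
      _ ≤ K₁ * ‖y₁ - y₂‖ := mul_le_mul_of_nonneg_right h2 (norm_nonneg _)
  -- the flow moves points at speed at most M
  have hdist : ∀ s ∈ I, ∀ t ∈ I, ‖θ t s x - x‖ ≤ M * |t - s| := by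
    intro s hs t ht
    have h := my_gron (f := fun u => θ u s x - x)
      (f' := fun u => V (u, θ u s x)) (K := 0) (ε := M) (δ := 0) (t₀ := s) (t := t)
      le_rfl hM0
      (fun u hu => (hode s hs x u (hsubI hs ht hu)).sub_const x)
      (fun u hu => by simpa using hM (u, θ u s x))
      (by simp [hinit s hs x])
    simpa using h
  -- choose a compact subinterval [α, β] of I containing τ and τ₀ in its interior
  set c' : ℝ := min τ τ₀ with hc'def
  set d' : ℝ := max τ τ₀ with hd'def
  set α : ℝ := (a + c') / 2 with hαdef
  set β : ℝ := (d' + b) / 2 with hβdef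
  have hac : a < c' := lt_min hτ.1 hτ₀.1
  have hdb : d' < b := max_lt hτ.2 hτ₀.2
  have hcd : c' ≤ d' := min_le_max
  have haα : a < α := by rw [hαdef]; linarith
  have hαc : α < c' := by rw [hαdef]; linarith
  have hdβ : d' < β := by rw [hβdef]; linarith
  have hβb : β < b := by rw [hβdef]; linarith
  have hIccI : Set.Icc α β ⊆ I := fun u hu =>
    ⟨lt_of_lt_of_le haα hu.1, lt_of_le_of_lt hu.2 hβb⟩
  have hταβ : τ ∈ Set.Ioo α β :=
    ⟨lt_of_lt_of_le hαc (min_le_left _ _), lt_of_le_of_lt (le_max_left _ _) hdβ⟩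
  have hτ₀αβ : τ₀ ∈ Set.Ioo α β :=
    ⟨lt_of_lt_of_le hαc (min_le_right _ _), lt_of_le_of_lt (le_max_right _ _) hdβ⟩
  -- the variational (linear) ODE along the trajectory of x
  set A : ℝ → ((EuclideanSpace ℝ (Fin n)) →L[ℝ] (EuclideanSpace ℝ (Fin n))) := fun t => fderiv ℝ (fun y => V (t, y)) (θ t τ₀ x) with hAdef
  have hAn : ∀ t : ℝ, ‖A t‖ ≤ C := fun t => hA_norm t _
  have hγcont : ContinuousOn (fun t => θ t τ₀ x) (Set.Icc α β) := fun t ht =>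
    ((hode τ₀ hτ₀ x t (hIccI ht)).continuousAt).continuousWithinAt
  have hAcont : ContinuousOn A (Set.Icc α β) := by
    have : ContinuousOn (fun t : ℝ => ((t, θ t τ₀ x) : ℝ × (EuclideanSpace ℝ (Fin n)))) (Set.Icc α β) :=
      (continuousOn_id).prodMk hγcont
    exact hDVcont.comp_continuousOn this
  -- Picard–Lindelöf data for the variational equation
  set m : ℝ := max (β - τ₀) (τ₀ - α) with hmdef
  have hm0 : 0 < m := lt_of_lt_of_le (sub_pos.mpr hτ₀αβ.2) (le_max_left _ _)
  have hmba : m < b - a := by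
    apply max_lt
    · have := hτ₀.1; linarith
    · have := hτ₀.2; linarith
  have hCm : C * m < 1 :=
    lt_of_lt_of_le (mul_lt_mul_of_pos_left hmba hC) hCab.le
  have hCm0 : 0 ≤ C * m := by positivity
  set R : ℝ := C * m / (1 - C * m) with hRdef
  have hR0 : 0 ≤ R := div_nonneg hCm0 (by linarith)
  have hPL : IsPicardLindelof (fun t (Wc : (EuclideanSpace ℝ (Fin n)) →L[ℝ] (EuclideanSpace ℝ (Fin n))) => (A t).comp Wc)
      (tmin := α) (tmax := β) ⟨τ₀, ⟨hτ₀αβ.1.le, hτ₀αβ.2.le⟩⟩ (ContinuousLinearMap.id ℝ (EuclideanSpace ℝ (Fin n))) R.toNNReal 0 (C * (1 + R)).toNNReal C.toNNReal := by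
    constructor
    · intro t _
      apply LipschitzWith.lipschitzOnWith
      apply LipschitzWith.of_dist_le_mul
      intro W₁ W₂
      rw [dist_eq_norm, dist_eq_norm, Real.coe_toNNReal _ hC.le,
        ← ContinuousLinearMap.comp_sub]
      calc ‖(A t).comp (W₁ - W₂)‖ ≤ ‖A t‖ * ‖W₁ - W₂‖ :=
            ContinuousLinearMap.opNorm_comp_le _ _
        _ ≤ C * ‖W₁ - W₂‖ := mul_le_mul_of_nonneg_right (hAn t) (norm_nonneg _)
    · intro Wc _
      exact hAcont.clm_comp continuousOn_const
    · intro t _ Wc hWc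
      rw [Metric.mem_closedBall, dist_eq_norm, Real.coe_toNNReal _ hR0] at hWc
      rw [Real.coe_toNNReal _ (mul_nonneg hC.le (by linarith))]
      have hWn : ‖Wc‖ ≤ 1 + R := by
        calc ‖Wc‖ = ‖ContinuousLinearMap.id ℝ (EuclideanSpace ℝ (Fin n)) + (Wc - ContinuousLinearMap.id ℝ (EuclideanSpace ℝ (Fin n)))‖ := by
              congr 1; abel
          _ ≤ ‖ContinuousLinearMap.id ℝ (EuclideanSpace ℝ (Fin n))‖ + ‖Wc - ContinuousLinearMap.id ℝ (EuclideanSpace ℝ (Fin n))‖ :=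
              norm_add_le _ _
          _ ≤ 1 + R := add_le_add ContinuousLinearMap.norm_id_le hWc
      calc ‖(A t).comp Wc‖ ≤ ‖A t‖ * ‖Wc‖ := ContinuousLinearMap.opNorm_comp_le _ _
        _ ≤ C * (1 + R) := mul_le_mul (hAn t) hWn (norm_nonneg _) hC.le
    · have hne : (1 - C * m) ≠ 0 := by intro h; simp only [sub_eq_zero] at h; linarith
      have hre : R * (1 - C * m) = C * m := div_mul_cancel₀ _ hne
      rw [NNReal.coe_zero, sub_zero, Real.coe_toNNReal _ (mul_nonneg hC.le (by linarith)), Real.coe_toNNReal _ hR0]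
      change C * (1 + R) * m ≤ R
      nlinarith [hre]
  obtain ⟨W, hWinit, hWIcc⟩ :=
    hPL.exists_eq_forall_mem_Icc_hasDerivWithinAt₀
  change W τ₀ = ContinuousLinearMap.id ℝ (EuclideanSpace ℝ (Fin n)) at hWinit
  have hWd : ∀ t ∈ Set.Ioo α β, HasDerivAt W ((A t).comp (W t)) t := fun t ht =>
    (hWIcc t (Set.Ioo_subset_Icc_self ht)).hasDerivAt (Icc_mem_nhds ht.1 ht.2)
  set J : Set ℝ := Set.uIcc τ₀ τ with hJdef
  have hJαβ : J ⊆ Set.Ioo α β := Set.ordConnected_Ioo.uIcc_subset hτ₀αβ hταβ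
  have hJI : J ⊆ I := fun u hu => hIccI (Set.Ioo_subset_Icc_self (hJαβ hu))
  -- differentiability of the flow in the initial value, with derivative `W τ`
  have hfd : HasFDerivAt (fun z => θ τ τ₀ z) (W τ) x := by
    rw [hasFDerivAt_iff_isLittleO, Asymptotics.isLittleO_iff]
    intro c hc
    -- uniform continuity of DV on a compact neighborhood of the trajectory
    set KS : Set (ℝ × (EuclideanSpace ℝ (Fin n))) :=
      (fun q : ℝ × (EuclideanSpace ℝ (Fin n)) => (q.1, θ q.1 τ₀ x + q.2)) '' (J ×ˢ Metric.closedBall (0 : (EuclideanSpace ℝ (Fin n))) 1)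
      with hKSdef
    have hKScpt : IsCompact KS := by
      apply IsCompact.image_of_continuousOn
        (isCompact_uIcc.prod (isCompact_closedBall _ _))
      apply ContinuousOn.prodMk continuous_fst.continuousOn
      exact ((hγcont.mono (fun u hu => Set.Ioo_subset_Icc_self (hJαβ hu))).comp
        continuous_fst.continuousOn (fun q hq => hq.1)).add continuous_snd.continuousOn
    have hunif := hKScpt.uniformContinuousOn_of_continuous
      (hDVcont.continuousOn (s := KS))
    rw [Metric.uniformContinuousOn_iff] at hunif
    set ε' : ℝ := c / (K₁ * K₁ * (b - a) + 1) with hε'def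
    have hBpos : 0 < K₁ * K₁ * (b - a) + 1 := by nlinarith [hK₁pos]
    have hε'pos : 0 < ε' := div_pos hc hBpos
    obtain ⟨δ₀', hδ₀'pos, hδ₀'⟩ := hunif ε' hε'pos
    set δ₀ : ℝ := min δ₀' 1 with hδ₀def
    have hδ₀pos : 0 < δ₀ := lt_min hδ₀'pos one_pos
    have hδ₀le1 : δ₀ ≤ 1 := min_le_right _ _
    filter_upwards [Metric.ball_mem_nhds x (div_pos hδ₀pos hK₁pos)] with y hy
    rw [Metric.mem_ball, dist_eq_norm] at hy
    have hyK : K₁ * ‖y - x‖ < δ₀ := by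
      rw [mul_comm]
      exact (lt_div_iff₀ hK₁pos).mp hy
    -- remainder estimate
    set ε'' : ℝ := ε' * (K₁ * ‖y - x‖) with hε''def
    have hε''0 : 0 ≤ ε'' := by positivity
    set z : ℝ → (EuclideanSpace ℝ (Fin n)) := fun t => θ t τ₀ y - θ t τ₀ x - W t (y - x) with hzdef
    have hRest : ∀ t ∈ J,
        ‖V (t, θ t τ₀ y) - V (t, θ t τ₀ x) - (A t) (θ t τ₀ y - θ t τ₀ x)‖ ≤ ε'' := by
      intro t ht
      have htI : t ∈ I := hJI ht
      have hcl : ‖θ t τ₀ y - θ t τ₀ x‖ ≤ K₁ * ‖y - x‖ := hlip' t htI y x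
      have hbound : ∀ w ∈ segment ℝ (θ t τ₀ x) (θ t τ₀ y),
          ‖fderiv ℝ (fun y' => V (t, y')) w - A t‖ ≤ ε' := by
        intro w hw
        have hwp : ‖w - θ t τ₀ x‖ ≤ ‖θ t τ₀ y - θ t τ₀ x‖ := my_seg_norm hw
        have hwδ : ‖w - θ t τ₀ x‖ < δ₀ := lt_of_le_of_lt (hwp.trans hcl) hyK
        have hmem1 : ((t, w) : ℝ × (EuclideanSpace ℝ (Fin n))) ∈ KS := by
          refine ⟨(t, w - θ t τ₀ x), ⟨ht, ?_⟩, by simp⟩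
          rw [Metric.mem_closedBall, dist_zero_right]
          linarith [hwδ, hδ₀le1]
        have hmem2 : ((t, θ t τ₀ x) : ℝ × (EuclideanSpace ℝ (Fin n))) ∈ KS :=
          ⟨(t, 0), ⟨ht, by simp⟩, by simp⟩
        have hdlt : dist ((t, w) : ℝ × (EuclideanSpace ℝ (Fin n))) (t, θ t τ₀ x) < δ₀ := by
          rw [Prod.dist_eq]
          simp only [dist_self, dist_eq_norm]
          rw [max_eq_right (norm_nonneg _)]
          exact hwδ
        have := hδ₀' (t, w) hmem1 (t, θ t τ₀ x) hmem2
          (lt_of_lt_of_le hdlt (min_le_left _ _))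
        rw [dist_eq_norm] at this
        exact this.le
      have hmv := Convex.norm_image_sub_le_of_norm_fderiv_le'
        (f := fun w => V (t, w)) (φ := A t)
        (fun w _ => (hVdiff t) w) hbound (convex_segment _ _)
        (left_mem_segment ℝ _ _) (right_mem_segment ℝ _ _)
      calc ‖V (t, θ t τ₀ y) - V (t, θ t τ₀ x) - (A t) (θ t τ₀ y - θ t τ₀ x)‖
          ≤ ε' * ‖θ t τ₀ y - θ t τ₀ x‖ := hmv
        _ ≤ ε' * (K₁ * ‖y - x‖) := mul_le_mul_of_nonneg_left hcl hε'pos.le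
    -- Grönwall for z
    set zd : ℝ → (EuclideanSpace ℝ (Fin n)) := fun t =>
      V (t, θ t τ₀ y) - V (t, θ t τ₀ x) - ((A t).comp (W t)) (y - x) with hzddef
    have hzd : ∀ u ∈ J, HasDerivAt z (zd u) u := by
      intro u hu
      have huI : u ∈ I := hJI hu
      have hW' : HasDerivAt (fun t => W t (y - x)) (((A u).comp (W u)) (y - x)) u := by
        have := (hWd u (hJαβ hu)).clm_apply (hasDerivAt_const u (y - x))
        simpa using this
      exact ((hode τ₀ hτ₀ y u huI).sub (hode τ₀ hτ₀ x u huI)).sub hW'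
    have hzb : ∀ u ∈ J, ‖zd u‖ ≤ C * ‖z u‖ + ε'' := by
      intro u hu
      have hkey : zd u = (V (u, θ u τ₀ y) - V (u, θ u τ₀ x)
          - (A u) (θ u τ₀ y - θ u τ₀ x)) + (A u) (z u) := by
        simp only [hzddef, hzdef, map_sub, ContinuousLinearMap.coe_comp',
          Function.comp_apply]
        abel
      rw [hkey]
      calc ‖(V (u, θ u τ₀ y) - V (u, θ u τ₀ x) - (A u) (θ u τ₀ y - θ u τ₀ x))
            + (A u) (z u)‖
          ≤ ‖V (u, θ u τ₀ y) - V (u, θ u τ₀ x) - (A u) (θ u τ₀ y - θ u τ₀ x)‖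
            + ‖(A u) (z u)‖ := norm_add_le _ _
        _ ≤ ε'' + C * ‖z u‖ := by
            apply add_le_add (hRest u hu)
            calc ‖(A u) (z u)‖ ≤ ‖A u‖ * ‖z u‖ := (A u).le_opNorm _
              _ ≤ C * ‖z u‖ := mul_le_mul_of_nonneg_right (hAn u) (norm_nonneg _)
        _ = C * ‖z u‖ + ε'' := by ring
    have hz0 : ‖z τ₀‖ ≤ 0 := by
      simp [hzdef, hinit τ₀ hτ₀ y, hinit τ₀ hτ₀ x, hWinit]
    have hgr := my_gron (f := z) (f' := zd) (K := C) (ε := ε'') (δ := 0)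
      (t₀ := τ₀) (t := τ) hC.le hε''0 hzd hzb hz0
    have hexp : Real.exp (C * |τ - τ₀|) ≤ K₁ :=
      Real.exp_le_exp.mpr (mul_le_mul_of_nonneg_left (habs_ab hτ hτ₀) hC.le)
    have habs : |τ - τ₀| ≤ b - a := habs_ab hτ hτ₀
    have hmain : ‖z τ‖ ≤ ε'' * (b - a) * K₁ := by
      calc ‖z τ‖ ≤ (0 + ε'' * |τ - τ₀|) * Real.exp (C * |τ - τ₀|) := hgr
        _ = ε'' * |τ - τ₀| * Real.exp (C * |τ - τ₀|) := by ring
        _ ≤ ε'' * (b - a) * K₁ :=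
            mul_le_mul (mul_le_mul_of_nonneg_left habs hε''0) hexp
              (Real.exp_pos _).le (mul_nonneg hε''0 (by linarith))
    have hεc : ε' * (K₁ * K₁ * (b - a) + 1) = c := div_mul_cancel₀ _ hBpos.ne'
    have hfin : ε'' * (b - a) * K₁ ≤ c * ‖y - x‖ := by
      have h2 : ε' * K₁ * (b - a) * K₁ ≤ c := by nlinarith [hε'pos.le, norm_nonneg (y - x)]
      calc ε'' * (b - a) * K₁ = (ε' * K₁ * (b - a) * K₁) * ‖y - x‖ := by
            rw [hε''def]; ring
        _ ≤ c * ‖y - x‖ := mul_le_mul_of_nonneg_right h2 (norm_nonneg _)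
    calc ‖θ τ τ₀ y - θ τ τ₀ x - (W τ) (y - x)‖ = ‖z τ‖ := rfl
      _ ≤ ε'' * (b - a) * K₁ := hmain
      _ ≤ c * ‖y - x‖ := hfin
  -- derivative of `s ↦ θ τ₀ s x` at `s = τ₀` is `-V (τ₀, x)`
  have hVx : ContinuousAt (fun t : ℝ => V (t, x)) τ₀ :=
    (hVcont.comp (continuous_id.prodMk continuous_const)).continuousAt
  have hg : HasDerivAt (fun s => θ τ₀ s x) (-V (τ₀, x)) τ₀ := by
    rw [hasDerivAt_iff_isLittleO, Asymptotics.isLittleO_iff]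
    intro c hc
    obtain ⟨δ₂, hδ₂pos, hδ₂⟩ := Metric.continuousAt_iff.mp hVx (c / 2) (by positivity)
    set δ₁ : ℝ := min (min (τ₀ - a) (b - τ₀)) (min δ₂ (c / (2 * (C * M + 1)))) with hδ₁def
    have hCM1 : 0 < 2 * (C * M + 1) := by positivity
    have hδ₁pos : 0 < δ₁ := by
      apply lt_min (lt_min (by linarith [hτ₀.1]) (by linarith [hτ₀.2]))
      exact lt_min hδ₂pos (by positivity)
    have e1 : δ₁ ≤ τ₀ - a := le_trans (min_le_left _ _) (min_le_left _ _)
    have e2 : δ₁ ≤ b - τ₀ := le_trans (min_le_left _ _) (min_le_right _ _)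
    have e3 : δ₁ ≤ δ₂ := le_trans (min_le_right _ _) (min_le_left _ _)
    have e4 : δ₁ ≤ c / (2 * (C * M + 1)) := le_trans (min_le_right _ _) (min_le_right _ _)
    filter_upwards [Metric.ball_mem_nhds τ₀ hδ₁pos] with s hs
    rw [Metric.mem_ball, Real.dist_eq] at hs
    obtain ⟨hs1, hs2⟩ := abs_lt.mp hs
    have hsI : s ∈ I := ⟨by linarith, by linarith⟩
    set F : ℝ → (EuclideanSpace ℝ (Fin n)) := fun t => θ t s x - x - (t - s) • V (τ₀, x) with hFdef
    have hFd : ∀ u ∈ Set.uIcc s τ₀, HasDerivAt F (V (u, θ u s x) - V (τ₀, x)) u := by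
      intro u hu
      have huI : u ∈ I := hsubI hsI hτ₀ hu
      have h1 := hode s hsI x u huI
      have h2 : HasDerivAt (fun t : ℝ => (t - s) • V (τ₀, x)) (V (τ₀, x)) u := by
        have := ((hasDerivAt_id u).sub_const s).smul_const (V (τ₀, x))
        simpa using this
      exact (h1.sub_const x).sub h2
    have hFb : ∀ u ∈ Set.uIcc s τ₀,
        ‖V (u, θ u s x) - V (τ₀, x)‖ ≤ 0 * ‖F u‖ + (C * M * δ₁ + c / 2) := by
      intro u hu
      have huI : u ∈ I := hsubI hsI hτ₀ hu
      have hus : |u - s| ≤ |τ₀ - s| := my_abs_uIcc hu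
      have huτ₀ : |u - τ₀| ≤ |s - τ₀| := my_abs_uIcc (Set.uIcc_comm s τ₀ ▸ hu)
      have hterm1 : ‖V (u, θ u s x) - V (u, x)‖ ≤ C * M * δ₁ := by
        calc ‖V (u, θ u s x) - V (u, x)‖ ≤ C * ‖θ u s x - x‖ := hVlip u _ _
          _ ≤ C * (M * |u - s|) := by
              apply mul_le_mul_of_nonneg_left (hdist s hsI u huI) hC.le
          _ ≤ C * (M * δ₁) := by
              apply mul_le_mul_of_nonneg_left _ hC.le
              apply mul_le_mul_of_nonneg_left _ hM0
              calc |u - s| ≤ |τ₀ - s| := hus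
                _ = |s - τ₀| := abs_sub_comm _ _
                _ ≤ δ₁ := hs.le
          _ = C * M * δ₁ := by ring
      have hterm2 : ‖V (u, x) - V (τ₀, x)‖ ≤ c / 2 := by
        have : dist u τ₀ < δ₂ := by
          rw [Real.dist_eq]
          calc |u - τ₀| ≤ |s - τ₀| := huτ₀
            _ < δ₁ := hs
            _ ≤ δ₂ := e3
        have := hδ₂ this
        rw [dist_eq_norm] at this
        exact this.le
      calc ‖V (u, θ u s x) - V (τ₀, x)‖
          = ‖(V (u, θ u s x) - V (u, x)) + (V (u, x) - V (τ₀, x))‖ := by abel_nf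
        _ ≤ ‖V (u, θ u s x) - V (u, x)‖ + ‖V (u, x) - V (τ₀, x)‖ := norm_add_le _ _
        _ ≤ C * M * δ₁ + c / 2 := add_le_add hterm1 hterm2
        _ = 0 * ‖F u‖ + (C * M * δ₁ + c / 2) := by ring
    have hF0 : ‖F s‖ ≤ 0 := by simp [hFdef, hinit s hsI x]
    have hgr := my_gron (f := F) (f' := fun u => V (u, θ u s x) - V (τ₀, x))
      (K := 0) (ε := C * M * δ₁ + c / 2) (δ := 0) (t₀ := s) (t := τ₀)
      le_rfl (by positivity) hFd hFb hF0
    have hδc : C * M * δ₁ ≤ c / 2 := by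
      have h1 : C * M * δ₁ ≤ C * M * (c / (2 * (C * M + 1))) :=
        mul_le_mul_of_nonneg_left e4 (by positivity)
      have h2 : (c / (2 * (C * M + 1))) * (2 * (C * M + 1)) = c :=
        div_mul_cancel₀ _ hCM1.ne'
      nlinarith [div_nonneg hc.le hCM1.le]
    have hFτ₀ : ‖F τ₀‖ ≤ c * |τ₀ - s| := by
      calc ‖F τ₀‖ ≤ (0 + (C * M * δ₁ + c / 2) * |τ₀ - s|) * Real.exp (0 * |τ₀ - s|) := hgr
        _ = (C * M * δ₁ + c / 2) * |τ₀ - s| := by simp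
        _ ≤ c * |τ₀ - s| := by
            apply mul_le_mul_of_nonneg_right _ (abs_nonneg _)
            linarith
    have hexpr : θ τ₀ s x - θ τ₀ τ₀ x - (s - τ₀) • (-V (τ₀, x)) = F τ₀ := by
      rw [hFdef, hinit τ₀ hτ₀ x]
      simp only [smul_neg, ← neg_smul, neg_sub]
    rw [hexpr]
    calc ‖F τ₀‖ ≤ c * |τ₀ - s| := hFτ₀
      _ = c * ‖s - τ₀‖ := by rw [Real.norm_eq_abs, abs_sub_comm]
  -- uniqueness / composition identity
  have huniq : ∀ s ∈ I, θ τ s x = θ τ τ₀ (θ τ₀ s x) := by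
    intro s hsI
    have h := ODE_solution_unique_of_mem_Ioo (v := fun t y => V (t, y))
      (s := fun _ => (Set.univ : Set (EuclideanSpace ℝ (Fin n)))) (K := C.toNNReal)
      (fun t _ => by
        show LipschitzOnWith C.toNNReal (fun y => V (t, y)) Set.univ
        exact (hVlipW t).lipschitzOnWith) (ht := hτ₀)
      (f := fun t => θ t s x) (g := fun t => θ t τ₀ (θ τ₀ s x))
      (fun t ht => ⟨hode s hsI x t ht, trivial⟩)
      (fun t ht => ⟨hode τ₀ hτ₀ (θ τ₀ s x) t ht, trivial⟩)
      ((hinit τ₀ hτ₀ (θ τ₀ s x)).symm)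
    exact h hτ
  have hev : (fun s => θ τ s x) =ᶠ[nhds τ₀] fun s => θ τ τ₀ (θ τ₀ s x) := by
    filter_upwards [Ioo_mem_nhds hτ₀.1 hτ₀.2] with s hs
    exact huniq s hs
  have hgx : θ τ₀ τ₀ x = x := hinit τ₀ hτ₀ x
  have hchain : HasDerivAt (fun s => θ τ τ₀ (θ τ₀ s x)) ((W τ) (-V (τ₀, x))) τ₀ := by
    have hfd' : HasFDerivAt (fun z => θ τ τ₀ z) (W τ) (θ τ₀ τ₀ x) := by rw [hgx]; exact hfd
    exact hfd'.comp_hasDerivAt τ₀ hg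
  refine ⟨hfd.differentiableAt, ?_⟩
  rw [hfd.fderiv]
  have : -((W τ) (V (τ₀, x))) = (W τ) (-V (τ₀, x)) := (map_neg _ _).symm
  rw [this]
  exact hchain.congr_of_eventuallyEq hev
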